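/- For all n ≥ 1 and 1 ≤ k ≤ n, the number of differed Delannoy paths ending at (n,n) with exactly k R-steps equals C(2k,k) · C(n+k-1, n-k). -/

import Mathlib

/-- Step vectors for Delannoy paths. -/
def Rstep : ℕ × ℕ := (1, 0)
def Ustep : ℕ × ℕ := (0, 1)
def Dstep : ℕ × ℕ := (1, 1)

/-- A list of steps is a Delannoy path if each step is R, U or D. -/
def IsDelannoyPath (l : List (ℕ × ℕ)) : Prop := ∀ s ∈ l, s = Rstep ∨ s = Ustep ∨ s = Dstep

/-- Endpoint of a path starting at the origin. -/
def pathEnd (l : List (ℕ × ℕ)) : ℕ × ℕ := ((l.map Prod.fst).sum, (l.map Prod.snd).sum)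

/-- Delannoy paths from (0,0) to (n,n) with exactly k R-steps. -/
def Del (n k : ℕ) : Set (List (ℕ × ℕ)) :=
  {l | IsDelannoyPath l ∧ pathEnd l = (n, n) ∧ l.count Rstep = k}

/-- Differed Delannoy paths: first step is not D. -/
def DiffDel (n k : ℕ) : Set (List (ℕ × ℕ)) :=
  {l | l ∈ Del n k ∧ l.head? ≠ some Dstep}

/-! ### Auxiliary machinery -/

/-- Delannoy-step lists with prescribed counts of each step. -/
def W (r u d : ℕ) : Set (List (ℕ × ℕ)) :=
  {l | IsDelannoyPath l ∧ l.count Rstep = r ∧ l.count Ustep = u ∧ l.count Dstep = d}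

def M (r u d : ℕ) : ℕ := (r+u+d).choose r * (u+d).choose u

section countLemmas
variable (t : List (ℕ × ℕ))
lemma cRR : (Rstep::t).count Rstep = t.count Rstep + 1 := List.count_cons_self
lemma cUU : (Ustep::t).count Ustep = t.count Ustep + 1 := List.count_cons_self
lemma cDD : (Dstep::t).count Dstep = t.count Dstep + 1 := List.count_cons_self
lemma cUR : (Rstep::t).count Ustep = t.count Ustep := List.count_cons_of_ne (by decide)
lemma cDR : (Rstep::t).count Dstep = t.count Dstep := List.count_cons_of_ne (by decide)
lemma cRU : (Ustep::t).count Rstep = t.count Rstep := List.count_cons_of_ne (by decide)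
lemma cDU : (Ustep::t).count Dstep = t.count Dstep := List.count_cons_of_ne (by decide)
lemma cRD : (Dstep::t).count Rstep = t.count Rstep := List.count_cons_of_ne (by decide)
lemma cUD : (Dstep::t).count Ustep = t.count Ustep := List.count_cons_of_ne (by decide)
end countLemmas

lemma W_zero : W 0 0 0 = {[]} := by
  ext l
  constructor
  · rintro ⟨hp, hr, hu, hd⟩
    rcases l with _ | ⟨a, t⟩
    · rfl
    · exfalso
      rcases hp a (List.mem_cons_self) with h | h | h
      · have : 0 < (a :: t).count Rstep := List.count_pos_iff.2 (by simp [h])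
        omega
      · have : 0 < (a :: t).count Ustep := List.count_pos_iff.2 (by simp [h])
        omega
      · have : 0 < (a :: t).count Dstep := List.count_pos_iff.2 (by simp [h])
        omega
  · rintro rfl
    refine ⟨fun s hs => by simp at hs, by simp, by simp, by simp⟩

lemma mem_W_cons {a : ℕ × ℕ} {t : List (ℕ × ℕ)} {r u d : ℕ} :
    a :: t ∈ W r u d ↔
      ((a = Rstep ∧ ∃ r', r = r' + 1 ∧ t ∈ W r' u d) ∨
       (a = Ustep ∧ ∃ u', u = u' + 1 ∧ t ∈ W r u' d) ∨
       (a = Dstep ∧ ∃ d', d = d' + 1 ∧ t ∈ W r u d')) := by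
  constructor
  · rintro ⟨hp, hr, hu, hd⟩
    have ht : IsDelannoyPath t := fun s hs => hp s (List.mem_cons_of_mem _ hs)
    rcases hp a (List.mem_cons_self) with h | h | h <;> subst h
    · rw [cRR] at hr; rw [cUR] at hu; rw [cDR] at hd
      exact Or.inl ⟨rfl, t.count Rstep, by omega, ht, rfl, hu, hd⟩
    · rw [cRU] at hr; rw [cUU] at hu; rw [cDU] at hd
      exact Or.inr (Or.inl ⟨rfl, t.count Ustep, by omega, ht, hr, rfl, hd⟩)
    · rw [cRD] at hr; rw [cUD] at hu; rw [cDD] at hd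
      exact Or.inr (Or.inr ⟨rfl, t.count Dstep, by omega, ht, hr, hu, rfl⟩)
  · rintro (⟨rfl, r', rfl, hp, hr, hu, hd⟩ | ⟨rfl, u', rfl, hp, hr, hu, hd⟩ | ⟨rfl, d', rfl, hp, hr, hu, hd⟩) <;>
      refine ⟨fun s hs => ?_, ?_, ?_, ?_⟩ <;>
      first
      | (rcases List.mem_cons.1 hs with h | h
         · subst h; simp
         · exact hp s h)
      | simp [cRR, cUU, cDD, cUR, cDR, cRU, cDU, cRD, cUD, hr, hu, hd]

lemma W_decomp (r u d : ℕ) (h : r + u + d ≠ 0) :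
    W r u d = (Rstep :: ·) '' (if r = 0 then ∅ else W (r-1) u d) ∪
              (Ustep :: ·) '' (if u = 0 then ∅ else W r (u-1) d) ∪
              (Dstep :: ·) '' (if d = 0 then ∅ else W r u (d-1)) := by
  ext l
  rcases l with _ | ⟨a, t⟩
  · constructor
    · rintro ⟨_, hr, hu, hd⟩
      simp at hr hu hd; omega
    · rintro ((h | h) | h) <;> · rcases h with ⟨t, _, ht⟩; simp at ht
  · rw [mem_W_cons]
    constructor
    · rintro (⟨rfl, r', rfl, ht⟩ | ⟨rfl, u', rfl, ht⟩ | ⟨rfl, d', rfl, ht⟩)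
      · exact Or.inl (Or.inl ⟨t, by simp [ht], rfl⟩)
      · exact Or.inl (Or.inr ⟨t, by simp [ht], rfl⟩)
      · exact Or.inr ⟨t, by simp [ht], rfl⟩
    · rintro ((h | h) | h)
      · rcases h with ⟨t', ht', he⟩
        obtain ⟨rfl, rfl⟩ := List.cons_eq_cons.1 he
        split at ht'
        · exact absurd ht' (Set.notMem_empty _)
        · exact Or.inl ⟨rfl, r - 1, by omega, ht'⟩
      · rcases h with ⟨t', ht', he⟩
        obtain ⟨rfl, rfl⟩ := List.cons_eq_cons.1 he
        split at ht'
        · exact absurd ht' (Set.notMem_empty _)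
        · exact Or.inr (Or.inl ⟨rfl, u - 1, by omega, ht'⟩)
      · rcases h with ⟨t', ht', he⟩
        obtain ⟨rfl, rfl⟩ := List.cons_eq_cons.1 he
        split at ht'
        · exact absurd ht' (Set.notMem_empty _)
        · exact Or.inr (Or.inr ⟨rfl, d - 1, by omega, ht'⟩)

lemma M_rec (r u d : ℕ) (h : r + u + d ≠ 0) :
    M r u d = (if r = 0 then 0 else M (r-1) u d) + (if u = 0 then 0 else M r (u-1) d) +
              (if d = 0 then 0 else M r u (d-1)) := by
  rcases r with _ | r <;> rcases u with _ | u <;> rcases d with _ | d <;> simp_all [M]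
  · rw [show u+1+(d+1) = (u+(d+1))+1 by ring, Nat.choose_succ_succ (u+(d+1)) u,
      show u+1+d = u+(d+1) by ring]
  · rw [show r+1+(d+1) = (r+(d+1))+1 by ring, Nat.choose_succ_succ (r+(d+1)) r,
      show r+1+d = r+(d+1) by ring]
  · rw [show r+1+(u+1) = (r+(u+1))+1 by ring, Nat.choose_succ_succ (r+(u+1)) r,
      show r+1+u = r+(u+1) by ring]
  · rw [show r+1+(u+1)+(d+1) = (r+u+d+2)+1 by ring, show r+(u+1)+(d+1) = r+u+d+2 by ring,
      show r+1+u+(d+1) = r+u+d+2 by ring, show r+1+(u+1)+d = r+u+d+2 by ring,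
      show u+1+(d+1) = (u+d+1)+1 by ring, show u+(d+1) = u+d+1 by ring,
      show u+1+d = u+d+1 by ring,
      Nat.choose_succ_succ (r+u+d+2) r, Nat.choose_succ_succ (u+d+1) u]
    ring

lemma cons_injective (a : ℕ × ℕ) : Function.Injective (a :: · : List (ℕ × ℕ) → List (ℕ × ℕ)) :=
  fun _ _ h => (List.cons_eq_cons.1 h).2

lemma disj_cons {a b : ℕ × ℕ} (h : a ≠ b) (S T : Set (List (ℕ × ℕ))) :
    Disjoint ((a :: ·) '' S) ((b :: ·) '' T) := by
  rw [Set.disjoint_left]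
  rintro x ⟨s, _, rfl⟩ ⟨t, _, hx⟩
  exact absurd (List.cons_eq_cons.1 hx).1.symm h

lemma W_card : ∀ N r u d, r + u + d ≤ N → (W r u d).Finite ∧ (W r u d).ncard = M r u d := by
  intro N
  induction N with
  | zero =>
    intro r u d h
    obtain ⟨rfl, rfl, rfl⟩ : r = 0 ∧ u = 0 ∧ d = 0 := by omega
    rw [W_zero]
    exact ⟨Set.finite_singleton _, by simp [M]⟩
  | succ N ih =>
    intro r u d h
    by_cases h0 : r + u + d = 0
    · obtain ⟨rfl, rfl, rfl⟩ : r = 0 ∧ u = 0 ∧ d = 0 := by omega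
      rw [W_zero]
      exact ⟨Set.finite_singleton _, by simp [M]⟩
    · have hR : (if r = 0 then (∅ : Set (List (ℕ×ℕ))) else W (r-1) u d).Finite ∧
          (if r = 0 then (∅ : Set (List (ℕ×ℕ))) else W (r-1) u d).ncard =
            (if r = 0 then 0 else M (r-1) u d) := by
        split
        · simp
        · exact ih (r-1) u d (by omega)
      have hU : (if u = 0 then (∅ : Set (List (ℕ×ℕ))) else W r (u-1) d).Finite ∧
          (if u = 0 then (∅ : Set (List (ℕ×ℕ))) else W r (u-1) d).ncard =
            (if u = 0 then 0 else M r (u-1) d) := by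
        split
        · simp
        · exact ih r (u-1) d (by omega)
      have hD : (if d = 0 then (∅ : Set (List (ℕ×ℕ))) else W r u (d-1)).Finite ∧
          (if d = 0 then (∅ : Set (List (ℕ×ℕ))) else W r u (d-1)).ncard =
            (if d = 0 then 0 else M r u (d-1)) := by
        split
        · simp
        · exact ih r u (d-1) (by omega)
      rw [W_decomp r u d h0]
      have fR := hR.1.image (Rstep :: ·)
      have fU := hU.1.image (Ustep :: ·)
      have fD := hD.1.image (Dstep :: ·)
      have dRU := disj_cons (show Rstep ≠ Ustep by decide)
        (if r = 0 then ∅ else W (r-1) u d) (if u = 0 then ∅ else W r (u-1) d)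
      have dRD := disj_cons (show Rstep ≠ Dstep by decide)
        (if r = 0 then ∅ else W (r-1) u d) (if d = 0 then ∅ else W r u (d-1))
      have dUD := disj_cons (show Ustep ≠ Dstep by decide)
        (if u = 0 then ∅ else W r (u-1) d) (if d = 0 then ∅ else W r u (d-1))
      constructor
      · exact (fR.union fU).union fD
      · rw [Set.ncard_union_eq (Set.disjoint_union_left.2 ⟨dRD, dUD⟩) (fR.union fU) fD,
          Set.ncard_union_eq dRU fR fU,
          Set.ncard_image_of_injective _ (cons_injective Rstep),
          Set.ncard_image_of_injective _ (cons_injective Ustep),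
          Set.ncard_image_of_injective _ (cons_injective Dstep),
          hR.2, hU.2, hD.2]
        exact (M_rec r u d h0).symm

lemma sum_fst (l : List (ℕ × ℕ)) (hp : IsDelannoyPath l) :
    (l.map Prod.fst).sum = l.count Rstep + l.count Dstep := by
  induction l with
  | nil => simp
  | cons a t ih =>
    have ht : IsDelannoyPath t := fun s hs => hp s (List.mem_cons_of_mem _ hs)
    have := ih ht
    rcases hp a (List.mem_cons_self) with h | h | h <;> subst h <;>
      simp only [List.map_cons, List.sum_cons, cRR, cDR, cRU, cDU, cRD, cDD, this] <;>
      simp [Rstep, Ustep, Dstep] <;> ring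

lemma sum_snd (l : List (ℕ × ℕ)) (hp : IsDelannoyPath l) :
    (l.map Prod.snd).sum = l.count Ustep + l.count Dstep := by
  induction l with
  | nil => simp
  | cons a t ih =>
    have ht : IsDelannoyPath t := fun s hs => hp s (List.mem_cons_of_mem _ hs)
    have := ih ht
    rcases hp a (List.mem_cons_self) with h | h | h <;> subst h <;>
      simp only [List.map_cons, List.sum_cons, cUR, cDR, cUU, cDU, cUD, cDD, this] <;>
      simp [Rstep, Ustep, Dstep] <;> ring

lemma Del_eq_W (n k : ℕ) (hk : k ≤ n) : Del n k = W k k (n - k) := by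
  ext l
  constructor
  · rintro ⟨hp, he, hr⟩
    have h1 := sum_fst l hp
    have h2 := sum_snd l hp
    have e1 : (l.map Prod.fst).sum = n := congrArg Prod.fst he
    have e2 : (l.map Prod.snd).sum = n := congrArg Prod.snd he
    exact ⟨hp, hr, by omega, by omega⟩
  · rintro ⟨hp, hr, hu, hd⟩
    have h1 := sum_fst l hp
    have h2 := sum_snd l hp
    refine ⟨hp, ?_, hr⟩
    have : (l.map Prod.fst).sum = n ∧ (l.map Prod.snd).sum = n := by omega
    simp [pathEnd, this.1, this.2]

lemma diffDel_decomp (n k : ℕ) (hk : 1 ≤ k) (hkn : k ≤ n) :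
    DiffDel n k = (Rstep :: ·) '' W (k-1) k (n-k) ∪ (Ustep :: ·) '' W k (k-1) (n-k) := by
  ext l
  constructor
  · rintro ⟨hdel, hhd⟩
    rw [Del_eq_W n k hkn] at hdel
    rcases l with _ | ⟨a, t⟩
    · rcases hdel with ⟨_, hr, _, _⟩
      simp at hr; omega
    · rcases mem_W_cons.1 hdel with ⟨rfl, r', hr', ht⟩ | ⟨rfl, u', hu', ht⟩ | ⟨rfl, _, _, _⟩
      · exact Or.inl ⟨t, by rwa [show k - 1 = r' by omega], rfl⟩
      · exact Or.inr ⟨t, by rwa [show k - 1 = u' by omega], rfl⟩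
      · exact absurd rfl hhd
  · rintro (⟨t, ht, rfl⟩ | ⟨t, ht, rfl⟩)
    · refine ⟨?_, by simp [Rstep, Dstep]⟩
      rw [Del_eq_W n k hkn, mem_W_cons]
      exact Or.inl ⟨rfl, k - 1, by omega, ht⟩
    · refine ⟨?_, by simp [Ustep, Dstep]⟩
      rw [Del_eq_W n k hkn, mem_W_cons]
      exact Or.inr (Or.inl ⟨rfl, k - 1, by omega, ht⟩)

lemma key_identity (j m : ℕ) :
    (2*j+m+1).choose j * (j+m+1).choose (j+1) + (2*j+m+1).choose (j+1) * (j+m).choose j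
      = (2*j+2).choose (j+1) * (2*j+m+1).choose m := by
  have key : ∀ a b : ℕ, a ≤ b → ((b.choose a : ℚ)) = b.factorial / (a.factorial * (b-a).factorial) :=
    fun a b h => Nat.cast_choose ℚ h
  have h1 := key j (2*j+m+1) (by omega)
  have h2 := key (j+1) (j+m+1) (by omega)
  have h3 := key (j+1) (2*j+m+1) (by omega)
  have h4 := key j (j+m) (by omega)
  have h5 := key (j+1) (2*j+2) (by omega)
  have h6 := key m (2*j+m+1) (by omega)
  have e1 : 2*j+m+1-j = j+m+1 := by omega
  have e2 : j+m+1-(j+1) = m := by omega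
  have e3 : 2*j+m+1-(j+1) = j+m := by omega
  have e4 : j+m-j = m := by omega
  have e5 : 2*j+2-(j+1) = j+1 := by omega
  have e6 : 2*j+m+1-m = 2*j+1 := by omega
  rw [e1] at h1; rw [e2] at h2; rw [e3] at h3; rw [e4] at h4; rw [e5] at h5; rw [e6] at h6
  have f1 : (j+m+1).factorial = (j+m+1) * (j+m).factorial := Nat.factorial_succ _
  have f2 : (2*j+2).factorial = (2*j+2) * (2*j+1).factorial := Nat.factorial_succ _
  have f3 : (j+1).factorial = (j+1) * j.factorial := Nat.factorial_succ _
  have : ((2*j+m+1).choose j * (j+m+1).choose (j+1) + (2*j+m+1).choose (j+1) * (j+m).choose j : ℚ)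
      = ((2*j+2).choose (j+1) * (2*j+m+1).choose m : ℚ) := by
    push_cast [h1, h2, h3, h4, h5, h6, f1, f2, f3]
    have pj : (j.factorial : ℚ) ≠ 0 := by positivity
    have pm : (m.factorial : ℚ) ≠ 0 := by positivity
    have pjm : ((j+m).factorial : ℚ) ≠ 0 := by positivity
    have p2j : ((2*j+1).factorial : ℚ) ≠ 0 := by positivity
    field_simp
    ring
  exact_mod_cast this

theorem diffDel_count (n k : ℕ) (hn : 1 ≤ n) (hk : 1 ≤ k) (hkn : k ≤ n) :
    (DiffDel n k).ncard = Nat.choose (2 * k) k * Nat.choose (n + k - 1) (n - k) := by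
  obtain ⟨j, rfl⟩ : ∃ j, k = j + 1 := ⟨k - 1, by omega⟩
  obtain ⟨m, rfl⟩ : ∃ m, n = j + 1 + m := ⟨n - (j + 1), by omega⟩
  rw [diffDel_decomp _ _ hk hkn]
  have e0 : j + 1 - 1 = j := by omega
  have e1 : j + 1 + m - (j + 1) = m := by omega
  rw [e0, e1]
  have hA := W_card (j + (j+1) + m) j (j+1) m le_rfl
  have hB := W_card ((j+1) + j + m) (j+1) j m le_rfl
  rw [Set.ncard_union_eq (disj_cons (by decide) _ _) (hA.1.image _) (hB.1.image _),
    Set.ncard_image_of_injective _ (cons_injective Rstep),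
    Set.ncard_image_of_injective _ (cons_injective Ustep), hA.2, hB.2]
  have g1 : j + 1 + m + (j + 1) - 1 = 2*j+m+1 := by omega
  rw [g1]
  have : M j (j+1) m + M (j+1) j m
      = (2*j+m+1).choose j * (j+m+1).choose (j+1) + (2*j+m+1).choose (j+1) * (j+m).choose j := by
    unfold M
    rw [show j + (j+1) + m = 2*j+m+1 by ring, show j+1+m = j+m+1 by ring,
      show j+1+j+m = 2*j+m+1 by ring, show j+m = j+m from rfl]
  rw [this, key_identity j m, show 2*(j+1) = 2*j+2 by ring]
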